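/- Let A : ℂ → M_n(ℂ) be analytic near z₀ with A(z₀) having a simple eigenvalue 0, with right eigenvector v and left eigenvector w (A(z₀)v = 0, A(z₀)*w = 0, ‖v‖ = ‖w‖ = 1), and suppose ⟨w, A'(z₀)v⟩ ≠ 0. Then for z near z₀, z ≠ z₀, A(z) is invertible and (z − z₀) A(z)⁻¹ converges as z → z₀ to (1/⟨w, A'(z₀)v⟩) |v⟩⟨w|. -/

import Mathlib

open Matrix Filter Topology

lemma left_kernel_one_dim {n : ℕ} (A₀ : Matrix (Fin n) (Fin n) ℂ) (v w : Fin n → ℂ)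
    (hv : A₀ *ᵥ v = 0) (hv0 : v ≠ 0) (hw0 : w ≠ 0)
    (hw : A₀ᴴ *ᵥ w = 0)
    (hsimple : ∀ x : Fin n → ℂ, A₀ *ᵥ x = 0 → ∃ c : ℂ, x = c • v) :
    ∀ y : Fin n → ℂ, A₀ᴴ *ᵥ y = 0 → ∃ c : ℂ, y = c • w := by
  open scoped ComplexOrder in
  have hker : LinearMap.ker A₀.mulVecLin = Submodule.span ℂ {v} := by
    ext x
    simp only [LinearMap.mem_ker, Matrix.mulVecLin_apply, Submodule.mem_span_singleton]
    constructor
    · intro hx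
      obtain ⟨c, hc⟩ := hsimple x hx
      exact ⟨c, hc.symm⟩
    · rintro ⟨c, rfl⟩
      simp [Matrix.mulVec_smul, hv]
  have h1 : Module.finrank ℂ (LinearMap.ker A₀.mulVecLin) = 1 := by
    rw [hker, finrank_span_singleton hv0]
  have hrn : A₀.rank + Module.finrank ℂ (LinearMap.ker A₀.mulVecLin) = n := by
    rw [Matrix.rank]
    rw [LinearMap.finrank_range_add_finrank_ker A₀.mulVecLin]
    simp
  have hrn' : A₀ᴴ.rank + Module.finrank ℂ (LinearMap.ker A₀ᴴ.mulVecLin) = n := by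
    rw [Matrix.rank]
    rw [LinearMap.finrank_range_add_finrank_ker A₀ᴴ.mulVecLin]
    simp
  have hfk : Module.finrank ℂ (LinearMap.ker A₀ᴴ.mulVecLin) = 1 := by
    have := Matrix.rank_conjTranspose A₀
    omega
  have hsp : Submodule.span ℂ {w} = LinearMap.ker A₀ᴴ.mulVecLin := by
    apply Submodule.eq_of_le_of_finrank_eq
    · rw [Submodule.span_le, Set.singleton_subset_iff]
      simpa [LinearMap.mem_ker, Matrix.mulVecLin_apply] using hw
    · rw [finrank_span_singleton hw0, hfk]
  intro y hy
  have : y ∈ Submodule.span ℂ {w} := by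
    rw [hsp]
    simpa [LinearMap.mem_ker, Matrix.mulVecLin_apply] using hy
  obtain ⟨c, hc⟩ := Submodule.mem_span_singleton.mp this
  exact ⟨c, hc.symm⟩

lemma adjugate_rank_one {n : ℕ} (A₀ : Matrix (Fin n) (Fin n) ℂ) (v w : Fin n → ℂ)
    (hv : A₀ *ᵥ v = 0) (hw : A₀ᴴ *ᵥ w = 0)
    (hvnorm : star v ⬝ᵥ v = 1) (hw0 : w ≠ 0)
    (hsimple : ∀ x : Fin n → ℂ, A₀ *ᵥ x = 0 → ∃ c : ℂ, x = c • v) :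
    ∃ α : ℂ, α ≠ 0 ∧ adjugate A₀ = α • vecMulVec v (star w) := by
  have hv0 : v ≠ 0 := by
    rintro rfl
    simp at hvnorm
  have hdet0 : A₀.det = 0 := Matrix.exists_mulVec_eq_zero_iff.mp ⟨v, hv0, hv⟩
  have hAN : A₀ * adjugate A₀ = 0 := by rw [Matrix.mul_adjugate, hdet0, zero_smul]
  have hNA : adjugate A₀ * A₀ = 0 := by rw [Matrix.adjugate_mul, hdet0, zero_smul]
  have hcol : ∀ j, ∃ c : ℂ, (fun i => adjugate A₀ i j) = c • v := by
    intro j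
    refine hsimple _ ?_
    ext k
    have := congrFun (congrFun hAN k) j
    simpa [Matrix.mul_apply, Matrix.mulVec, dotProduct] using this
  choose c hc using hcol
  obtain ⟨i₀, hi₀⟩ := Function.ne_iff.mp hv0
  simp only [Pi.zero_apply] at hi₀
  have hNij : ∀ i j, adjugate A₀ i j = c j * v i := by
    intro i j
    have := congrFun (hc j) i
    simpa using this
  have hrow : ∀ j, (∑ k, c k * A₀ k j) = 0 := by
    intro j
    have h0 := congrFun (congrFun hNA i₀) j
    simp only [Matrix.mul_apply, Matrix.zero_apply] at h0
    have : ∑ k, adjugate A₀ i₀ k * A₀ k j = v i₀ * ∑ k, c k * A₀ k j := by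
      rw [Finset.mul_sum]
      refine Finset.sum_congr rfl fun k _ => ?_
      rw [hNij]; ring
    rw [this] at h0
    exact (mul_eq_zero.mp h0).resolve_left hi₀
  have hker : A₀ᴴ *ᵥ (fun k => star (c k)) = 0 := by
    ext j
    simp only [Matrix.mulVec, dotProduct, Matrix.conjTranspose_apply, Pi.zero_apply]
    calc ∑ k, star (A₀ k j) * star (c k) = star (∑ k, c k * A₀ k j) := by
          rw [star_sum]
          exact Finset.sum_congr rfl fun k _ => by rw [StarMul.star_mul]
      _ = 0 := by rw [hrow j, star_zero]
  obtain ⟨β, hβ⟩ := left_kernel_one_dim A₀ v w hv hv0 hw0 hw hsimple _ hker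
  set α := star β with hα
  have hcw : ∀ k, c k = α * star (w k) := by
    intro k
    have := congrFun hβ k
    simp only [Pi.smul_apply, smul_eq_mul] at this
    have := congrArg star this
    simpa [hα] using this
  have hN : adjugate A₀ = α • vecMulVec v (star w) := by
    ext i j
    rw [hNij, hcw]
    simp [Matrix.vecMulVec_apply]
    ring
  refine ⟨α, ?_, hN⟩
  -- show α ≠ 0
  obtain ⟨j₀, hj₀⟩ := Function.ne_iff.mp hw0
  simp only [Pi.zero_apply] at hj₀
  have hwA : star w ᵥ* A₀ = 0 := by
    have := Matrix.star_mulVec (M := A₀ᴴ) (v := w)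
    rw [hw, star_zero, Matrix.conjTranspose_conjTranspose] at this
    exact this.symm
  set C := A₀.updateRow j₀ (star v) with hC
  have hdetC : C.det ≠ 0 := by
    intro h0
    obtain ⟨x, hx0, hx⟩ := Matrix.exists_mulVec_eq_zero_iff.mpr h0
    have h1 : ∀ i, i ≠ j₀ → (A₀ *ᵥ x) i = 0 := by
      intro i hi
      have := congrFun hx i
      simpa [hC, Matrix.mulVec, Matrix.updateRow_ne hi] using this
    have h2 : star v ⬝ᵥ x = 0 := by
      have := congrFun hx j₀
      simpa [hC, Matrix.mulVec, dotProduct] using this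
    have h3 : star w ⬝ᵥ (A₀ *ᵥ x) = 0 := by
      rw [Matrix.dotProduct_mulVec, hwA, zero_dotProduct]
    have h4 : (A₀ *ᵥ x) j₀ = 0 := by
      have hsum : ∑ i, star (w i) * (A₀ *ᵥ x) i = star (w j₀) * (A₀ *ᵥ x) j₀ :=
        Finset.sum_eq_single j₀ (fun i _ hi => by rw [h1 i hi, mul_zero])
          (fun h => absurd (Finset.mem_univ j₀) h)
      have : star (w j₀) * (A₀ *ᵥ x) j₀ = 0 := by
        rw [← hsum]
        simpa [dotProduct] using h3
      exact (mul_eq_zero.mp this).resolve_left (star_ne_zero.mpr hj₀)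
    have h5 : A₀ *ᵥ x = 0 := by
      ext i
      rcases eq_or_ne i j₀ with rfl | hi
      · exact h4
      · exact h1 i hi
    obtain ⟨cc, rfl⟩ := hsimple x h5
    have : cc = 0 := by
      have := h2
      rw [dotProduct_smul] at this
      rw [hvnorm] at this
      simpa using this
    exact hx0 (by simp [this])
  have hdc : C.det = α * star (w j₀) := by
    have h1 : C.det = cramer A₀ᵀ (star v) j₀ := by
      rw [Matrix.cramer_transpose_apply]
    rw [h1, Matrix.cramer_eq_adjugate_mulVec, ← Matrix.adjugate_transpose]
    have : ((adjugate A₀)ᵀ *ᵥ star v) j₀ = ∑ i, adjugate A₀ i j₀ * star (v i) := by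
      simp [Matrix.mulVec, dotProduct, Matrix.transpose_apply, mul_comm]
    rw [this]
    have : ∀ i, adjugate A₀ i j₀ * star (v i) = (α * star (w j₀)) * (star (v i) * v i) := by
      intro i
      rw [hNij, hcw]
      ring
    rw [Finset.sum_congr rfl fun i _ => this i, ← Finset.mul_sum]
    have : ∑ i, star (v i) * v i = 1 := hvnorm
    rw [this, mul_one]
  intro h0
  rw [hdc, h0, zero_mul] at hdetC
  exact hdetC rfl

lemma det_analyticAt' {m : ℕ} {M : ℂ → Matrix (Fin m) (Fin m) ℂ} {z₀ : ℂ}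
    (h : ∀ i j, AnalyticAt ℂ (fun z => M z i j) z₀) :
    AnalyticAt ℂ (fun z => (M z).det) z₀ := by
  simp_rw [Matrix.det_apply']
  exact Finset.analyticAt_fun_sum _ fun σ _ =>
    analyticAt_const.mul (Finset.analyticAt_fun_prod _ fun i _ => h (σ i) i)

lemma adjugate_analyticAt' {m : ℕ} {M : ℂ → Matrix (Fin m) (Fin m) ℂ} {z₀ : ℂ}
    (h : ∀ i j, AnalyticAt ℂ (fun z => M z i j) z₀) (i j : Fin m) :
    AnalyticAt ℂ (fun z => adjugate (M z) i j) z₀ := by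
  simp_rw [Matrix.adjugate_apply]
  refine det_analyticAt' fun k l => ?_
  rcases eq_or_ne k j with rfl | hk
  · simp_rw [Matrix.updateRow_self]; exact analyticAt_const
  · simp_rw [Matrix.updateRow_ne hk]; exact h k l

/-- Let `A : ℂ → Mₙ(ℂ)` be analytic near `z₀`, with `A z₀` having a simple
eigenvalue `0` with normalized right eigenvector `v` and left eigenvector `w`
(`A z₀ v = 0`, `(A z₀)* w = 0`), and suppose `⟨w, A'(z₀) v⟩ ≠ 0`. Then for `z` near
`z₀`, `z ≠ z₀`, `A z` is invertible and `(z - z₀) A(z)⁻¹` converges as `z → z₀` to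
`(1/⟨w, A'(z₀) v⟩) |v⟩⟨w|`, the rank-one matrix `x ↦ ⟨w, x⟩ v`. -/
theorem simple_zero_eigenvalue_resolvent_residue
    (n : ℕ) (A : ℂ → Matrix (Fin n) (Fin n) ℂ) (z₀ : ℂ)
    (hA : ∀ i j, AnalyticAt ℂ (fun z => A z i j) z₀)
    (v w : Fin n → ℂ)
    (hv : A z₀ *ᵥ v = 0) (hw : (A z₀)ᴴ *ᵥ w = 0)
    (hvnorm : star v ⬝ᵥ v = 1) (hwnorm : star w ⬝ᵥ w = 1)
    (hsimple : ∀ x : Fin n → ℂ, A z₀ *ᵥ x = 0 → ∃ c : ℂ, x = c • v)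
    (hc : star w ⬝ᵥ ((Matrix.of fun i j => deriv (fun z => A z i j) z₀) *ᵥ v) ≠ 0) :
    (∀ᶠ z in 𝓝[≠] z₀, IsUnit (A z).det) ∧
    Tendsto (fun z : ℂ => (z - z₀) • (A z)⁻¹) (𝓝[≠] z₀)
      (𝓝 ((star w ⬝ᵥ ((Matrix.of fun i j => deriv (fun z => A z i j) z₀) *ᵥ v))⁻¹
        • Matrix.vecMulVec v (star w))) := by
  set A' : Matrix (Fin n) (Fin n) ℂ := Matrix.of fun i j => deriv (fun z => A z i j) z₀ with hA'
  set cst : ℂ := star w ⬝ᵥ (A' *ᵥ v) with hcst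
  set A₀ : Matrix (Fin n) (Fin n) ℂ := A z₀ with hA₀
  have hv0 : v ≠ 0 := by rintro rfl; simp at hvnorm
  have hw0 : w ≠ 0 := by rintro rfl; simp at hwnorm
  obtain ⟨α, hα0, hN⟩ : ∃ α : ℂ, α ≠ 0 ∧ adjugate A₀ = α • vecMulVec v (star w) :=
    adjugate_rank_one A₀ v w hv hw hvnorm hw0 hsimple
  have hdet0 : A₀.det = 0 := Matrix.exists_mulVec_eq_zero_iff.mp ⟨v, hv0, hv⟩
  have hwA : star w ᵥ* A₀ = 0 := by
    have := Matrix.star_mulVec (M := A₀ᴴ) (v := w)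
    rw [hw, star_zero, Matrix.conjTranspose_conjTranspose] at this
    exact this.symm
  set D : ℂ → ℂ := fun z => (A z).det with hD
  -- derivative of D at z₀ equals α * cst
  have hadj_an : ∀ i j, AnalyticAt ℂ (fun z => adjugate (A z) i j) z₀ := adjugate_analyticAt' hA
  have hu : ∀ j, HasDerivAt (fun z => ∑ i, star (w i) * A z i j)
      (∑ i, star (w i) * A' i j) z₀ := by
    intro j
    exact HasDerivAt.fun_sum fun i _ => ((hA i j).differentiableAt.hasDerivAt).const_mul _
  have hpdiff : ∀ j, DifferentiableAt ℂ (fun z => ∑ k, adjugate (A z) j k * w k) z₀ := by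
    intro j
    exact DifferentiableAt.fun_sum fun k _ => ((hadj_an j k).differentiableAt).mul_const _
  have hu0 : ∀ j, (∑ i, star (w i) * A₀ i j) = 0 := by
    intro j
    have := congrFun hwA j
    simpa [Matrix.vecMul, dotProduct] using this
  have hh : HasDerivAt D (α * cst) z₀ := by
    have hh1 : HasDerivAt (fun z => ∑ j, (∑ i, star (w i) * A z i j) * (∑ k, adjugate (A z) j k * w k))
        (∑ j, ((∑ i, star (w i) * A' i j) * (∑ k, adjugate A₀ j k * w k)
          + (∑ i, star (w i) * A₀ i j) * deriv (fun z => ∑ k, adjugate (A z) j k * w k) z₀)) z₀ :=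
      HasDerivAt.fun_sum fun j _ => (hu j).mul ((hpdiff j).hasDerivAt)
    have heqfun : (fun z => ∑ j, (∑ i, star (w i) * A z i j) * (∑ k, adjugate (A z) j k * w k)) = D := by
      funext z
      have h1 : (fun j => ∑ i, star (w i) * A z i j) = star w ᵥ* A z := by
        funext j; simp [Matrix.vecMul, dotProduct]
      have h2 : (fun j => ∑ k, adjugate (A z) j k * w k) = adjugate (A z) *ᵥ w := by
        funext j; simp [Matrix.mulVec, dotProduct]
      calc ∑ j, (∑ i, star (w i) * A z i j) * (∑ k, adjugate (A z) j k * w k)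
          = (star w ᵥ* A z) ⬝ᵥ (adjugate (A z) *ᵥ w) := by
            rw [← h1, ← h2]; rfl
        _ = star w ⬝ᵥ (A z *ᵥ (adjugate (A z) *ᵥ w)) := (Matrix.dotProduct_mulVec _ _ _).symm
        _ = star w ⬝ᵥ (((A z) * adjugate (A z)) *ᵥ w) := by rw [← Matrix.mulVec_mulVec]
        _ = star w ⬝ᵥ (((A z).det • (1 : Matrix (Fin n) (Fin n) ℂ)) *ᵥ w) := by
            rw [Matrix.mul_adjugate]
        _ = (A z).det * (star w ⬝ᵥ w) := by
            rw [Matrix.smul_mulVec, Matrix.one_mulVec, dotProduct_smul, smul_eq_mul]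
        _ = D z := by rw [hwnorm, mul_one]
    have hval : (∑ j, ((∑ i, star (w i) * A' i j) * (∑ k, adjugate A₀ j k * w k)
          + (∑ i, star (w i) * A₀ i j) * deriv (fun z => ∑ k, adjugate (A z) j k * w k) z₀))
        = α * cst := by
      have hNw : ∀ j, (∑ k, adjugate A₀ j k * w k) = α * v j := by
        intro j
        rw [hN]
        have : ∀ k, (α • vecMulVec v (star w)) j k * w k = (α * v j) * (star (w k) * w k) := by
          intro k; simp [Matrix.vecMulVec_apply]; ring
        rw [Finset.sum_congr rfl fun k _ => this k, ← Finset.mul_sum]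
        have : ∑ k, star (w k) * w k = 1 := hwnorm
        rw [this, mul_one]
      simp only [hu0, zero_mul, add_zero]
      rw [Finset.sum_congr rfl fun j _ => by rw [hNw j]]
      rw [hcst]
      simp only [dotProduct, Matrix.mulVec, Finset.mul_sum, Finset.sum_mul]
      rw [Finset.sum_comm]
      refine Finset.sum_congr rfl fun j _ => Finset.sum_congr rfl fun i _ => ?_
      simp only [Pi.star_apply]
      ring
    rw [← heqfun]
    rw [← hval]
    exact hh1
  -- now the limit arguments
  have hd0 : α * cst ≠ 0 := mul_ne_zero hα0 hc
  have hslope : Tendsto (slope D z₀) (𝓝[≠] z₀) (𝓝 (α * cst)) :=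
    hasDerivAt_iff_tendsto_slope.mp hh
  have hzne : ∀ᶠ z in 𝓝[≠] z₀, z ≠ z₀ := eventually_mem_nhdsWithin
  have hDz0 : D z₀ = 0 := hdet0
  have hsl_eq : ∀ z, slope D z₀ z = D z / (z - z₀) := by
    intro z; rw [slope_def_field, hDz0, sub_zero]
  have hslope_ne : ∀ᶠ z in 𝓝[≠] z₀, slope D z₀ z ≠ 0 := hslope.eventually_ne hd0
  have hDne : ∀ᶠ z in 𝓝[≠] z₀, D z ≠ 0 := by
    filter_upwards [hslope_ne, hzne] with z h1 h2
    intro h0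
    rw [hsl_eq, h0, zero_div] at h1
    exact h1 rfl
  constructor
  · filter_upwards [hDne] with z h1
    exact isUnit_iff_ne_zero.mpr h1
  · have hadjcont : Tendsto (fun z => adjugate (A z)) (𝓝 z₀) (𝓝 (adjugate A₀)) := by
      refine tendsto_pi_nhds.mpr ?_
      intro i
      rw [tendsto_pi_nhds]
      intro j
      exact (hadj_an i j).continuousAt
    have htend2 : Tendsto (fun z => (slope D z₀ z)⁻¹ • adjugate (A z)) (𝓝[≠] z₀)
        (𝓝 ((α * cst)⁻¹ • adjugate A₀)) :=
      (hslope.inv₀ hd0).smul (hadjcont.mono_left nhdsWithin_le_nhds)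
    have heq : (fun z => (slope D z₀ z)⁻¹ • adjugate (A z)) =ᶠ[𝓝[≠] z₀]
        (fun z : ℂ => (z - z₀) • (A z)⁻¹) := by
      filter_upwards [hDne, hzne] with z h1 h2
      rw [Matrix.inv_def, Ring.inverse_eq_inv', smul_smul, hsl_eq, inv_div, div_eq_mul_inv]
    have hfinal : (α * cst)⁻¹ • adjugate A₀ = cst⁻¹ • Matrix.vecMulVec v (star w) := by
      rw [hN, smul_smul]
      congr 1
      field_simp
    rw [← hfinal]
    exact htend2.congr' heq
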